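/- Let f(x) = c₁x^{d₁} + ⋯ + c_t x^{d_t} ∈ ℤ[x] with nonzero integer coefficients, |cᵢ| ≤ C, d₁ < ⋯ < d_t. Let β ≥ 2C+1 be an integer and set Q = (f(β)/β^{d_t}) / (f(β+1)/(β+1)^{d_t}) and E = 1 + 2C/(β(β−1)). Then 1/E < Q < E. -/

import Mathlib

open Polynomial Finset

set_option maxHeartbeats 2000000 in
private lemma key9 (f : Polynomial ℤ) (hf : f ≠ 0) (C β : ℤ)
    (hC : ∀ i, |f.coeff i| ≤ C) (hβ : β ≥ 2 * C + 1)
    (hlead : 0 < f.leadingCoeff) :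
    (1 : ℚ) / (1 + 2 * (C : ℚ) / ((β : ℚ) * ((β : ℚ) - 1))) <
      (((f.eval β : ℤ) : ℚ) / (β : ℚ) ^ f.natDegree) /
        (((f.eval (β + 1) : ℤ) : ℚ) / ((β : ℚ) + 1) ^ f.natDegree) ∧
    (((f.eval β : ℤ) : ℚ) / (β : ℚ) ^ f.natDegree) /
        (((f.eval (β + 1) : ℤ) : ℚ) / ((β : ℚ) + 1) ^ f.natDegree) <
      1 + 2 * (C : ℚ) / ((β : ℚ) * ((β : ℚ) - 1)) := by
  set d := f.natDegree with hd
  have ha1 : (1:ℤ) ≤ f.leadingCoeff := hlead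
  have hC1 : (1:ℤ) ≤ C := le_trans ha1 (le_trans (le_abs_self _) (hC d))
  set b : ℚ := (β:ℚ) with hbdef
  set c : ℚ := (C:ℚ) with hcdef
  set a : ℚ := (f.leadingCoeff : ℚ) with hadef
  have hc1 : (1:ℚ) ≤ c := by rw [hcdef]; exact_mod_cast hC1
  have ha : (1:ℚ) ≤ a := by rw [hadef]; exact_mod_cast ha1
  have hac : a ≤ c := by
    have h := le_trans (le_abs_self _) (hC d)
    rw [hadef, hcdef]; exact_mod_cast h
  have hb : 2*c + 1 ≤ b := by rw [hcdef, hbdef]; exact_mod_cast hβ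
  have hb3 : (3:ℚ) ≤ b := by linarith
  have hb0 : (0:ℚ) < b := by linarith
  have hb1 : (0:ℚ) < b - 1 := by linarith
  have hb1' : (2:ℚ)*c ≤ b - 1 := by linarith
  have hCabs : ∀ i, |(f.coeff i : ℚ)| ≤ c := by
    intro i; rw [hcdef]; exact_mod_cast hC i
  -- abbreviations
  set P : ℚ := b ^ d with hPdef
  set Q : ℚ := (b+1) ^ d with hQdef
  have hP : 0 < P := pow_pos hb0 d
  have hQ : 0 < Q := pow_pos (by linarith) d
  have hPQ : P ≤ Q := pow_le_pow_left₀ (le_of_lt hb0) (by linarith) d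
  set R1 : ℚ := ∑ i ∈ Finset.range d, (f.coeff i : ℚ) * b ^ i with hR1def
  set R2 : ℚ := ∑ i ∈ Finset.range d, (f.coeff i : ℚ) * (b+1) ^ i with hR2def
  set S1 : ℚ := ∑ i ∈ Finset.range d, b ^ i with hS1def
  set S2 : ℚ := ∑ i ∈ Finset.range d, (b+1) ^ i with hS2def
  have hS1 : S1 * (b - 1) = P - 1 := by
    rw [hS1def, geom_sum_mul]
  have hS2 : S2 * b = Q - 1 := by
    have := geom_sum_mul (b+1) d
    rw [hS2def]; convert this using 2 <;> ring
  have hS1nn : 0 ≤ S1 := Finset.sum_nonneg fun i _ => pow_nonneg (le_of_lt hb0) i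
  have hS2nn : 0 ≤ S2 := Finset.sum_nonneg fun i _ => pow_nonneg (by linarith) i
  -- evaluation identities
  have hev1 : ((f.eval β : ℤ) : ℚ) = a * P + R1 := by
    rw [Polynomial.eval_eq_sum_range (p := f) β]
    push_cast
    rw [Finset.sum_range_succ]
    rw [hadef, hPdef, hR1def, ← hd, Polynomial.coeff_natDegree]
    ring
  have hev2 : ((f.eval (β+1) : ℤ) : ℚ) = a * Q + R2 := by
    rw [Polynomial.eval_eq_sum_range (p := f) (β+1)]
    push_cast
    rw [Finset.sum_range_succ]
    rw [hadef, hQdef, hR2def, ← hd, Polynomial.coeff_natDegree]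
    ring
  -- bounds on R1, R2
  have hR1b : |R1| ≤ c * S1 := by
    rw [hR1def]
    calc |∑ i ∈ Finset.range d, (f.coeff i : ℚ) * b ^ i|
        ≤ ∑ i ∈ Finset.range d, |(f.coeff i : ℚ) * b ^ i| :=
          Finset.abs_sum_le_sum_abs _ _
      _ ≤ ∑ i ∈ Finset.range d, c * b ^ i := by
          apply Finset.sum_le_sum
          intro i _
          rw [abs_mul, abs_pow, abs_of_pos hb0]
          exact mul_le_mul_of_nonneg_right (hCabs i) (pow_nonneg (le_of_lt hb0) i)
      _ = c * S1 := by rw [hS1def, Finset.mul_sum]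
  have hR2b : |R2| ≤ c * S2 := by
    rw [hR2def]
    calc |∑ i ∈ Finset.range d, (f.coeff i : ℚ) * (b+1) ^ i|
        ≤ ∑ i ∈ Finset.range d, |(f.coeff i : ℚ) * (b+1) ^ i| :=
          Finset.abs_sum_le_sum_abs _ _
      _ ≤ ∑ i ∈ Finset.range d, c * (b+1) ^ i := by
          apply Finset.sum_le_sum
          intro i _
          rw [abs_mul, abs_pow, abs_of_pos (by linarith : (0:ℚ) < b+1)]
          exact mul_le_mul_of_nonneg_right (hCabs i) (pow_nonneg (by linarith) i)
      _ = c * S2 := by rw [hS2def, Finset.mul_sum]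
  have hc0 : (0:ℚ) < c := by linarith
  -- |R1| ≤ P/2
  have hR1half : |R1| ≤ P / 2 := by
    have h1 : |R1| * (b-1) ≤ c * S1 * (b-1) :=
      mul_le_mul_of_nonneg_right hR1b (le_of_lt hb1)
    rw [mul_assoc, hS1] at h1
    have h2 : (2*|R1|)*c ≤ (P-1)*c := by
      calc (2*|R1|)*c = |R1| * (2*c) := by ring
        _ ≤ |R1| * (b-1) := mul_le_mul_of_nonneg_left hb1' (abs_nonneg R1)
        _ ≤ c * (P-1) := h1
        _ = (P-1)*c := by ring
    have h3 : 2*|R1| ≤ P - 1 := le_of_mul_le_mul_right h2 hc0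
    linarith
  -- |R2| < Q/2
  have hR2half : |R2| < Q / 2 := by
    have h1 : |R2| * b ≤ c * S2 * b :=
      mul_le_mul_of_nonneg_right hR2b (le_of_lt hb0)
    rw [mul_assoc, hS2] at h1
    have h2 : (2*|R2|)*c ≤ (Q-1)*c := by
      calc (2*|R2|)*c = |R2| * (2*c) := by ring
        _ ≤ |R2| * b := mul_le_mul_of_nonneg_left (by linarith) (abs_nonneg R2)
        _ ≤ c * (Q-1) := h1
        _ = (Q-1)*c := by ring
    have h3 : 2*|R2| ≤ Q - 1 := le_of_mul_le_mul_right h2 hc0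
    linarith
  -- key bound on D = R1*Q - R2*P
  set e : ℚ := 2 * c / (b * (b-1)) with hedef
  have he0 : 0 < e := by
    apply div_pos (by linarith) (mul_pos hb0 hb1)
  have htermnn : ∀ i ∈ Finset.range d, 0 ≤ b ^ i * Q - (b+1) ^ i * P := by
    intro i hi
    have hid : i ≤ d := le_of_lt (Finset.mem_range.mp hi)
    have h1 : P = b ^ i * b ^ (d - i) := by
      rw [hPdef, ← pow_add]; congr 1; omega
    have h2 : Q = (b+1) ^ i * (b+1) ^ (d - i) := by
      rw [hQdef, ← pow_add]; congr 1; omega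
    rw [h1, h2]
    have h3 : b ^ (d-i) ≤ (b+1) ^ (d-i) :=
      pow_le_pow_left₀ (le_of_lt hb0) (by linarith) _
    have h4 : (0:ℚ) ≤ b ^ i := pow_nonneg (le_of_lt hb0) i
    have h5 : (0:ℚ) ≤ (b+1) ^ i := pow_nonneg (by linarith) i
    have heq : b ^ i * ((b+1) ^ i * (b+1) ^ (d-i)) - (b+1) ^ i * (b ^ i * b ^ (d-i))
        = b ^ i * (b+1) ^ i * ((b+1) ^ (d-i) - b ^ (d-i)) := by ring
    rw [heq]
    exact mul_nonneg (mul_nonneg h4 h5) (sub_nonneg.mpr h3)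
  have hDsum : R1 * Q - R2 * P
      = ∑ i ∈ Finset.range d, ((f.coeff i : ℚ) * (b ^ i * Q - (b+1) ^ i * P)) := by
    rw [hR1def, hR2def, Finset.sum_mul, Finset.sum_mul, ← Finset.sum_sub_distrib]
    apply Finset.sum_congr rfl
    intro i _; ring
  have hDb : |R1 * Q - R2 * P| ≤ c * (S1 * Q - S2 * P) := by
    rw [hDsum]
    calc |∑ i ∈ Finset.range d, ((f.coeff i : ℚ) * (b ^ i * Q - (b+1) ^ i * P))|
        ≤ ∑ i ∈ Finset.range d, |(f.coeff i : ℚ) * (b ^ i * Q - (b+1) ^ i * P)| :=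
          Finset.abs_sum_le_sum_abs _ _
      _ ≤ ∑ i ∈ Finset.range d, c * (b ^ i * Q - (b+1) ^ i * P) := by
          apply Finset.sum_le_sum
          intro i hi
          rw [abs_mul, abs_of_nonneg (htermnn i hi)]
          exact mul_le_mul_of_nonneg_right (hCabs i) (htermnn i hi)
      _ = c * (S1 * Q - S2 * P) := by
          rw [hS1def, hS2def, Finset.sum_mul, Finset.sum_mul, ← Finset.sum_sub_distrib,
            Finset.mul_sum]
  have hDkey : |R1 * Q - R2 * P| < e / 2 * (P * Q) := by
    have h1 : c * (S1 * Q - S2 * P) < e / 2 * (P * Q) := by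
      have he2 : e / 2 * (b * (b-1)) = c := by
        rw [hedef]; field_simp
      have hgoal : c * (S1 * Q - S2 * P) * (b * (b-1)) < e / 2 * (P * Q) * (b * (b-1)) := by
        have hexp : e / 2 * (P * Q) * (b * (b-1)) = c * (P * Q) := by
          rw [← he2]; ring
        rw [hexp]
        -- c * (S1*Q - S2*P) * b * (b-1) vs c * P * Q
        -- using (b-1)*S1 = P-1 and b*S2 = Q-1
        have expand : c * (S1 * Q - S2 * P) * (b * (b-1))
            = c * ((S1 * (b-1)) * Q * b - (S2 * b) * P * (b-1)) := by ring
        rw [expand, hS1, hS2]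
        -- c * ((P-1)*Q*b - (Q-1)*P*(b-1)) < c * (P*Q)
        have hPb : P * (b-1) < Q * b := by
          calc P * (b-1) ≤ Q * (b-1) := mul_le_mul_of_nonneg_right hPQ (le_of_lt hb1)
            _ < Q * b := mul_lt_mul_of_pos_left (by linarith) hQ
        have hlt : (P-1)*Q*b - (Q-1)*P*(b-1) < P*Q := by
          have hre : (P-1)*Q*b - (Q-1)*P*(b-1) = P*Q + (P*(b-1) - Q*b) := by ring
          rw [hre]; linarith
        exact mul_lt_mul_of_pos_left hlt hc0
      have hpos : (0:ℚ) < b * (b-1) := mul_pos hb0 hb1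
      exact lt_of_mul_lt_mul_right hgoal (le_of_lt hpos)
    exact lt_of_le_of_lt hDb h1
  -- numerators
  set N1 : ℚ := a * P + R1 with hN1def
  set N2 : ℚ := a * Q + R2 with hN2def
  have hN1l : P / 2 ≤ N1 := by
    have h1 := (abs_le.mp hR1half).1
    have h2 : P ≤ a * P := le_mul_of_one_le_left (le_of_lt hP) ha
    rw [hN1def]; linarith
  have hN2l : Q / 2 < N2 := by
    have h1 := (abs_lt.mp hR2half).1
    have h2 : Q ≤ a * Q := le_mul_of_one_le_left (le_of_lt hQ) ha
    rw [hN2def]; linarith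
  have hN1pos : 0 < N1 := lt_of_lt_of_le (by linarith) hN1l
  have hN2pos : 0 < N2 := lt_trans (by linarith) hN2l
  have hdiff : N1 * Q - N2 * P = R1 * Q - R2 * P := by rw [hN1def, hN2def]; ring
  have hDlt := (abs_lt.mp hDkey).2
  have hDgt := (abs_lt.mp hDkey).1
  -- rewrite goal
  rw [hev1, hev2]
  have hratio : (N1 / P) / (N2 / Q) = (N1 * Q) / (N2 * P) := by
    field_simp
  rw [hratio]
  have hNP : 0 < N2 * P := mul_pos hN2pos hP
  have hNQ : 0 < N1 * Q := mul_pos hN1pos hQ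
  clear_value a b c P Q R1 R2 S1 S2 N1 N2 e
  constructor
  · rw [div_lt_div_iff₀ (by linarith) hNP]
    -- 1 * (N2 * P) < N1 * Q * (1 + e)
    have h1 : e / 2 * (P * Q) ≤ e * (N1 * Q) := by
      have h := mul_nonneg (mul_nonneg (le_of_lt he0) (le_of_lt hQ))
        (sub_nonneg.mpr hN1l)
      have heq : e * Q * (N1 - P/2) = e * (N1 * Q) - e / 2 * (P * Q) := by ring
      linarith [heq ▸ h]
    have hexp : N1 * Q * (1 + e) = N1 * Q + e * (N1 * Q) := by ring
    linarith [hdiff, hDgt, h1, hexp]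
  · rw [div_lt_iff₀ hNP]
    -- N1 * Q < (1 + e) * (N2 * P)
    have h1 : e / 2 * (P * Q) < e * (N2 * P) := by
      have h := mul_pos (mul_pos he0 hP) (sub_pos.mpr hN2l)
      have heq : e * P * (N2 - Q/2) = e * (N2 * P) - e / 2 * (P * Q) := by ring
      linarith [heq ▸ h]
    have hexp : (1 + e) * (N2 * P) = N2 * P + e * (N2 * P) := by ring
    linarith [hdiff, hDlt, h1, hexp]

theorem stmt9 (f : Polynomial ℤ) (hf : f ≠ 0) (C β : ℤ)
    (hC : ∀ i, |f.coeff i| ≤ C) (hβ : β ≥ 2 * C + 1) :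
    (1 : ℚ) / (1 + 2 * (C : ℚ) / ((β : ℚ) * ((β : ℚ) - 1))) <
      (((f.eval β : ℤ) : ℚ) / (β : ℚ) ^ f.natDegree) /
        (((f.eval (β + 1) : ℤ) : ℚ) / ((β : ℚ) + 1) ^ f.natDegree) ∧
    (((f.eval β : ℤ) : ℚ) / (β : ℚ) ^ f.natDegree) /
        (((f.eval (β + 1) : ℤ) : ℚ) / ((β : ℚ) + 1) ^ f.natDegree) <
      1 + 2 * (C : ℚ) / ((β : ℚ) * ((β : ℚ) - 1)) := by
  rcases lt_or_gt_of_ne (Polynomial.leadingCoeff_ne_zero.mpr hf) with hneg | hpos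
  · have hf' : -f ≠ 0 := neg_ne_zero.mpr hf
    have hC' : ∀ i, |(-f).coeff i| ≤ C := by
      intro i; rw [Polynomial.coeff_neg, abs_neg]; exact hC i
    have hlead' : 0 < (-f).leadingCoeff := by
      rw [Polynomial.leadingCoeff_neg]; linarith
    have h := key9 (-f) hf' C β hC' hβ hlead'
    simpa [Polynomial.natDegree_neg, Polynomial.eval_neg, Int.cast_neg, neg_div,
      div_neg, neg_neg, neg_div_neg_eq] using h
  · exact key9 f hf C β hC hβ hpos
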